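/- Σ₁ ⊆ (Σ₀ + ch(S)) ∩ (ch(Σ₀) + S). -/

import Mathlib

open MeasureTheory Topology
open scoped Pointwise ENNReal

set_option linter.unusedSectionVars false

section HilbertAux

variable {E : Type*} [NormedAddCommGroup E] [InnerProductSpace ℝ E] [CompleteSpace E]

local notation "⟪" x ", " y "⟫" => @inner ℝ _ _ x y

lemma aux_isUnit_lower (A : E →L[ℝ] E) (h : IsUnit A) :
    ∃ c > 0, ∀ ψ : E, c * ‖ψ‖ ≤ ‖A ψ‖ := by
  obtain ⟨u, rfl⟩ := h
  refine ⟨(‖((u⁻¹ : (E →L[ℝ] E)ˣ) : E →L[ℝ] E)‖ + 1)⁻¹, by positivity, fun ψ => ?_⟩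
  have h1 : ((u⁻¹ : (E →L[ℝ] E)ˣ) : E →L[ℝ] E) (((u : (E →L[ℝ] E)ˣ) : E →L[ℝ] E) ψ) = ψ := by
    rw [← ContinuousLinearMap.mul_apply, u.inv_mul, ContinuousLinearMap.one_apply]
  have h2 : ‖ψ‖ ≤ ‖((u⁻¹ : (E →L[ℝ] E)ˣ) : E →L[ℝ] E)‖ * ‖((u : (E →L[ℝ] E)ˣ) : E →L[ℝ] E) ψ‖ := by
    conv_lhs => rw [← h1]
    exact ContinuousLinearMap.le_opNorm _ _
  have h3 : (0:ℝ) ≤ ‖((u⁻¹ : (E →L[ℝ] E)ˣ) : E →L[ℝ] E)‖ := norm_nonneg _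
  have h4 : (0:ℝ) ≤ ‖((u : (E →L[ℝ] E)ˣ) : E →L[ℝ] E) ψ‖ := norm_nonneg _
  rw [inv_mul_le_iff₀ (by positivity)]
  nlinarith

lemma aux_isUnit_of_bound (A : E →L[ℝ] E) (hA : IsSelfAdjoint A) {δ : ℝ} (hδ : 0 < δ)
    (hbd : ∀ ψ : E, δ * ‖ψ‖ ≤ ‖A ψ‖) : IsUnit A := by
  have hsymm := ContinuousLinearMap.isSelfAdjoint_iff_isSymmetric.mp hA
  have hinj : Function.Injective A := by
    intro x y hxy
    have h1 := hbd (x - y)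
    rw [map_sub, hxy, sub_self, norm_zero] at h1
    have h2 : ‖x - y‖ = 0 :=
      le_antisymm (by nlinarith [norm_nonneg (x - y)]) (norm_nonneg _)
    rw [norm_eq_zero, sub_eq_zero] at h2
    exact h2
  have hanti : AntilipschitzWith (⟨δ, hδ.le⟩ : NNReal)⁻¹ A := by
    refine A.antilipschitz_of_bound fun x => ?_
    show ‖x‖ ≤ δ⁻¹ * ‖A x‖
    rw [← div_eq_inv_mul, le_div_iff₀ hδ]
    linarith [hbd x]
  have hclosed : IsClosed (Set.range A) := hanti.isClosed_range A.uniformContinuous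
  have hclosed' : IsClosed ((LinearMap.range (A : E →ₗ[ℝ] E) : Submodule ℝ E) : Set E) := by
    rwa [LinearMap.coe_range]
  haveI := hclosed'.completeSpace_coe
  have horth : (LinearMap.range (A : E →ₗ[ℝ] E))ᗮ = ⊥ := by
    rw [Submodule.eq_bot_iff]
    intro x hx
    have hx' : ∀ y : E, ⟪A y, x⟫ = 0 := fun y =>
      (Submodule.mem_orthogonal _ x).mp hx (A y) (LinearMap.mem_range.mpr ⟨y, rfl⟩)
    have hAx : A x = 0 :=
      inner_self_eq_zero.mp ((hsymm.apply_clm (A x) x).symm.trans (hx' (A x)))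
    have h1 := hbd x
    rw [hAx, norm_zero] at h1
    have h2 : ‖x‖ = 0 := le_antisymm (by nlinarith [norm_nonneg x]) (norm_nonneg _)
    rwa [norm_eq_zero] at h2
  have hrange : LinearMap.range (A : E →ₗ[ℝ] E) = ⊤ := Submodule.orthogonal_eq_bot_iff.mp horth
  rw [ContinuousLinearMap.isUnit_iff_bijective]
  exact ⟨hinj, LinearMap.range_eq_top.mp hrange⟩

lemma aux_inner_le (A : E →L[ℝ] E) (hA : IsSelfAdjoint A) {b : ℝ}
    (hb : spectrum ℝ A ⊆ Set.Iic b) (ψ : E) : ⟪ψ, A ψ⟫ ≤ b * (‖ψ‖ * ‖ψ‖) := by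
  have hsymm := ContinuousLinearMap.isSelfAdjoint_iff_isSymmetric.mp hA
  set s : Set ℝ := insert b {t | ∃ φ : E, ‖φ‖ = 1 ∧ t = ⟪φ, A φ⟫} with hs
  have hsne : s.Nonempty := ⟨b, Set.mem_insert _ _⟩
  have hbdd : BddAbove s := by
    refine ⟨max b ‖A‖, fun t ht => ?_⟩
    rcases ht with rfl | ⟨φ, hφ, rfl⟩
    · exact le_max_left _ _
    · refine le_trans ?_ (le_max_right _ _)
      calc ⟪φ, A φ⟫ ≤ ‖φ‖ * ‖A φ‖ := real_inner_le_norm _ _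
        _ ≤ ‖φ‖ * (‖A‖ * ‖φ‖) := by
            have := A.le_opNorm φ
            nlinarith [norm_nonneg φ]
        _ = ‖A‖ := by rw [hφ]; ring
  set M := sSup s with hM
  have hsmem : ∀ φ : E, ‖φ‖ = 1 → ⟪φ, A φ⟫ ≤ M :=
    fun φ hφ => le_csSup hbdd (Set.mem_insert_of_mem _ ⟨φ, hφ, rfl⟩)
  have hscale : ∀ φ : E, φ ≠ 0 → ⟪φ, A φ⟫ ≤ M * (‖φ‖ * ‖φ‖) := by
    intro φ hφ0
    have hn : ‖φ‖ ≠ 0 := norm_ne_zero_iff.mpr hφ0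
    set ψ1 : E := ‖φ‖⁻¹ • φ with hψ1def
    have hψ1 : ‖ψ1‖ = 1 := by
      rw [hψ1def, norm_smul, norm_inv, norm_norm, inv_mul_cancel₀ hn]
    have hφeq : φ = ‖φ‖ • ψ1 := by
      rw [hψ1def, smul_smul, mul_inv_cancel₀ hn, one_smul]
    have h1 : ⟪φ, A φ⟫ = (‖φ‖ * ‖φ‖) * ⟪ψ1, A ψ1⟫ := by
      conv_lhs => rw [hφeq]
      rw [A.map_smul, real_inner_smul_left, inner_smul_right]
      ring
    have h2 := hsmem ψ1 hψ1
    have h3 : 0 < ‖φ‖ * ‖φ‖ := by positivity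
    nlinarith
  have key : M ≤ b := by
    by_contra hlt
    push_neg at hlt
    have hMspec : M ∈ spectrum ℝ A := by
      rw [spectrum.mem_iff]
      intro hu
      set A' : E →L[ℝ] E := algebraMap ℝ (E →L[ℝ] E) M - A with hA'def
      have hA'sa : IsSelfAdjoint A' := ((IsSelfAdjoint.all M).algebraMap _).sub hA
      have hA'symm := ContinuousLinearMap.isSelfAdjoint_iff_isSymmetric.mp hA'sa
      have happly : ∀ φ : E, A' φ = M • φ - A φ := by
        intro φ
        rw [hA'def, ContinuousLinearMap.sub_apply, Algebra.algebraMap_eq_smul_one,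
          ContinuousLinearMap.smul_apply, ContinuousLinearMap.one_apply]
      have hinnerA' : ∀ φ : E, ⟪φ, A' φ⟫ = M * (‖φ‖ * ‖φ‖) - ⟪φ, A φ⟫ := by
        intro φ
        rw [happly, inner_sub_right, real_inner_smul_right, real_inner_self_eq_norm_mul_norm]
      have hpos : ∀ φ : E, 0 ≤ ⟪φ, A' φ⟫ := by
        intro φ
        rcases eq_or_ne φ 0 with rfl | hφ0
        · simp
        · rw [hinnerA']
          linarith [hscale φ hφ0]
      have hCS : ∀ x : E, ‖A' x‖ * ‖A' x‖ ≤ ‖A'‖ * ⟪x, A' x⟫ := by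
        intro x
        have hquad : ∀ t : ℝ, 0 ≤ ⟪A' x, A' (A' x)⟫ * (t * t) + (2 * ⟪A' x, A' x⟫) * t
            + ⟪x, A' x⟫ := by
          intro t
          have h0 := hpos (x + t • A' x)
          have hexp : ⟪x + t • A' x, A' (x + t • A' x)⟫
              = ⟪A' x, A' (A' x)⟫ * (t * t) + (2 * ⟪A' x, A' x⟫) * t + ⟪x, A' x⟫ := by
            rw [map_add, A'.map_smul, inner_add_left, inner_add_right, inner_add_right,
              real_inner_smul_left, real_inner_smul_left, inner_smul_right, inner_smul_right]
            have hsym1 : ⟪x, A' (A' x)⟫ = ⟪A' x, A' x⟫ := (hA'symm.apply_clm x (A' x)).symm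
            rw [hsym1]
            ring
          rw [hexp] at h0
          linarith
        have hd := discrim_le_zero hquad
        rw [discrim] at hd
        have h1 : ⟪A' x, A' x⟫ = ‖A' x‖ * ‖A' x‖ := real_inner_self_eq_norm_mul_norm _
        have h2 : ⟪A' x, A' (A' x)⟫ ≤ ‖A' x‖ * (‖A'‖ * ‖A' x‖) := by
          calc ⟪A' x, A' (A' x)⟫ ≤ ‖A' x‖ * ‖A' (A' x)‖ := real_inner_le_norm _ _
            _ ≤ ‖A' x‖ * (‖A'‖ * ‖A' x‖) := by
                have := A'.le_opNorm (A' x)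
                nlinarith [norm_nonneg (A' x)]
        have h3 := hpos x
        rw [h1] at hd
        rcases eq_or_lt_of_le (norm_nonneg (A' x)) with h4 | h4
        · rw [← h4]
          nlinarith [mul_nonneg (norm_nonneg A') h3]
        · nlinarith [hd, mul_le_mul_of_nonneg_right h2 h3, mul_pos h4 h4, h3,
            norm_nonneg A']
      obtain ⟨c, hc0, hc⟩ := aux_isUnit_lower _ hu
      set ε : ℝ := min ((M - b) / 2) (c * c / (2 * (‖A'‖ + 1))) with hεdef
      have hε0 : 0 < ε := lt_min (by linarith) (by positivity)
      obtain ⟨tv, htvs, htM⟩ := exists_lt_of_lt_csSup hsne (show M - ε < M by linarith)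
      rcases Set.mem_insert_iff.mp htvs with heq | ⟨φ, hφ1, heq⟩
      · have hε1 : ε ≤ (M - b) / 2 := min_le_left _ _
        rw [heq] at htM
        linarith
      · rw [heq] at htM
        have h1 : ⟪φ, A' φ⟫ = M * (‖φ‖ * ‖φ‖) - ⟪φ, A φ⟫ := hinnerA' φ
        rw [hφ1] at h1
        have h2 : ⟪φ, A' φ⟫ < ε := by rw [h1]; nlinarith
        have h3 := hCS φ
        have h4 := hc φ
        rw [hφ1, mul_one] at h4
        have h5 : ε ≤ c * c / (2 * (‖A'‖ + 1)) := min_le_right _ _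
        have h6 : 0 ≤ ⟪φ, A' φ⟫ := hpos φ
        have h7 : ‖A'‖ * ⟪φ, A' φ⟫ ≤ (‖A'‖ + 1) * ε := by nlinarith [norm_nonneg A']
        have h8 : (‖A'‖ + 1) * ε ≤ c * c / 2 := by
          have h9 : (‖A'‖ + 1) * ε ≤ (‖A'‖ + 1) * (c * c / (2 * (‖A'‖ + 1))) := by
            nlinarith [norm_nonneg A']
          have h10 : (‖A'‖ + 1) * (c * c / (2 * (‖A'‖ + 1))) = c * c / 2 := by
            field_simp
          linarith
        nlinarith
    have := hb hMspec
    rw [Set.mem_Iic] at this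
    linarith
  rcases eq_or_ne ψ 0 with rfl | hψ0
  · simp
  · have h1 := hscale ψ hψ0
    have h2 : 0 < ‖ψ‖ := norm_pos_iff.mpr hψ0
    nlinarith

lemma aux_inner_ge (A : E →L[ℝ] E) (hA : IsSelfAdjoint A) {a : ℝ}
    (ha : spectrum ℝ A ⊆ Set.Ici a) (ψ : E) : a * (‖ψ‖ * ‖ψ‖) ≤ ⟪ψ, A ψ⟫ := by
  have hneg : spectrum ℝ (-A) ⊆ Set.Iic (-a) := by
    intro t ht
    rw [← spectrum.neg_eq, Set.mem_neg] at ht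
    have := ha ht
    rw [Set.mem_Ici] at this
    rw [Set.mem_Iic]
    linarith
  have h := aux_inner_le (-A) hA.neg hneg ψ
  rw [ContinuousLinearMap.neg_apply, inner_neg_right] at h
  linarith

set_option synthInstance.maxHeartbeats 1000000 in
set_option maxHeartbeats 1000000 in
lemma aux_far_bound (B : E →L[ℝ] E) (hB : IsSelfAdjoint B) {c d : ℝ} (hd : 0 < d)
    (h : ∀ t ∈ spectrum ℝ B, d ≤ |t - c|) (ψ : E) :
    d * ‖ψ‖ ≤ ‖(B - algebraMap ℝ (E →L[ℝ] E) c) ψ‖ := by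
  set T : E →L[ℝ] E := B - algebraMap ℝ (E →L[ℝ] E) c with hTdef
  have hTsa : IsSelfAdjoint T := hB.sub ((IsSelfAdjoint.all c).algebraMap _)
  have hTsymm := ContinuousLinearMap.isSelfAdjoint_iff_isSymmetric.mp hTsa
  have hspec : spectrum ℝ (T ^ 2) ⊆ Set.Ici (d * d) := by
    intro sv hsv
    rw [Set.mem_Ici]
    by_contra hlt
    push_neg at hlt
    have hunit : IsUnit (algebraMap ℝ (E →L[ℝ] E) sv - T ^ 2) := by
      rcases lt_or_ge sv 0 with hneg | hpos
      · set A₀ : E →L[ℝ] E := T ^ 2 - algebraMap ℝ (E →L[ℝ] E) sv with hA₀def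
        have hA₀sa : IsSelfAdjoint A₀ := (hTsa.pow 2).sub ((IsSelfAdjoint.all sv).algebraMap _)
        have hbound : ∀ φ : E, (-sv) * ‖φ‖ ≤ ‖A₀ φ‖ := by
          intro φ
          have happ : A₀ φ = T (T φ) - sv • φ := by
            rw [hA₀def, ContinuousLinearMap.sub_apply, Algebra.algebraMap_eq_smul_one,
              ContinuousLinearMap.smul_apply, ContinuousLinearMap.one_apply, pow_two,
              ContinuousLinearMap.mul_apply]
          have hinner : ⟪φ, A₀ φ⟫ = ‖T φ‖ * ‖T φ‖ - sv * (‖φ‖ * ‖φ‖) := by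
            rw [happ, inner_sub_right, real_inner_smul_right,
              real_inner_self_eq_norm_mul_norm, ← hTsymm.apply_clm φ (T φ),
              real_inner_self_eq_norm_mul_norm]
          have hCS := real_inner_le_norm φ (A₀ φ)
          rcases eq_or_ne φ 0 with rfl | hφ0
          · simp
          · have hφpos : 0 < ‖φ‖ := norm_pos_iff.mpr hφ0
            nlinarith [norm_nonneg (T φ), norm_nonneg (A₀ φ)]
        have hu0 : IsUnit A₀ := aux_isUnit_of_bound A₀ hA₀sa (by linarith) hbound
        have heq : algebraMap ℝ (E →L[ℝ] E) sv - T ^ 2 = -A₀ := by rw [hA₀def, neg_sub]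
        rw [heq]
        exact hu0.neg
      · set u := Real.sqrt sv with hu
        have hu2 : u * u = sv := Real.mul_self_sqrt hpos
        have hu0 : 0 ≤ u := Real.sqrt_nonneg _
        have hud : u < d := by nlinarith
        have hpu : IsUnit (algebraMap ℝ (E →L[ℝ] E) (c + u) - B) := by
          rw [← spectrum.notMem_iff]
          intro hmem
          have hd2 := h _ hmem
          rw [add_sub_cancel_left, abs_of_nonneg hu0] at hd2
          linarith
        have hmu : IsUnit (B - algebraMap ℝ (E →L[ℝ] E) (c - u)) := by
          have hmu' : IsUnit (algebraMap ℝ (E →L[ℝ] E) (c - u) - B) := by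
            rw [← spectrum.notMem_iff]
            intro hmem
            have hd2 := h _ hmem
            have heq : c - u - c = -u := by ring
            rw [heq, abs_neg, abs_of_nonneg hu0] at hd2
            linarith
          have := hmu'.neg
          rwa [neg_sub] at this
        have hfact : algebraMap ℝ (E →L[ℝ] E) sv - T ^ 2
            = (algebraMap ℝ (E →L[ℝ] E) (c + u) - B)
              * (B - algebraMap ℝ (E →L[ℝ] E) (c - u)) := by
          rw [hTdef, ← hu2]
          simp only [Algebra.algebraMap_eq_smul_one, pow_two, mul_sub, sub_mul,
            smul_mul_assoc, mul_smul_comm, mul_one, one_mul]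
          module
        rw [hfact]
        exact hpu.mul hmu
    rw [spectrum.mem_iff] at hsv
    exact hsv hunit
  have h2 := aux_inner_ge _ (hTsa.pow 2) hspec ψ
  have h3 : ⟪ψ, (T ^ 2) ψ⟫ = ‖T ψ‖ * ‖T ψ‖ := by
    rw [pow_two, ContinuousLinearMap.mul_apply, ← hTsymm.apply_clm ψ (T ψ)]
    exact real_inner_self_eq_norm_mul_norm _
  rw [h3] at h2
  nlinarith [norm_nonneg (T ψ), norm_nonneg ψ, mul_nonneg hd.le (norm_nonneg ψ)]

end HilbertAux

set_option maxHeartbeats 2000000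

/-- **Statement 4.** In the setting of an ergodic Schrödinger operator with an Anderson-type
random perturbation, the Minkowski sum `Λ₀ + S` of the unperturbed almost sure spectrum
and the support of the single-site measure is contained in the perturbed almost sure
spectrum `Λ₁`. -/
theorem sum_subset_perturbed_spectrum
    {X : Type*} [MetricSpace X] [CompactSpace X] [Nonempty X]
    [MeasurableSpace X] [BorelSpace X]
    -- `T` is a homeomorphism of `X`
    (T : X ≃ₜ X)
    -- `μ` is an ergodic Borel probability measure with full topological support
    (μ : Measure X) [IsProbabilityMeasure μ]
    (hT : Ergodic T μ)
    (hfull : ∀ U : Set X, IsOpen U → U.Nonempty → μ U ≠ 0)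
    -- the continuous sampling function
    (f : C(X, ℝ))
    -- the unperturbed Schrödinger operators `H_x` on `ℓ²(ℤ)`
    (H : X → (lp (fun _ : ℤ => ℝ) 2 →L[ℝ] lp (fun _ : ℤ => ℝ) 2))
    (hH : ∀ (x : X) (ψ : lp (fun _ : ℤ => ℝ) 2) (n : ℤ),
      (H x ψ) n = ψ (n + 1) + ψ (n - 1) + f ((T.toEquiv ^ n) x) * ψ n)
    (hHsa : ∀ x, IsSelfAdjoint (H x))
    -- the unperturbed almost sure spectrum `Λ₀`
    (Λ₀ : Set ℝ) (hΛ₀compact : IsCompact Λ₀)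
    (hΛ₀ : ∀ᵐ x ∂μ, spectrum ℝ (H x) = Λ₀)
    -- the single-site measure `ν` with compact support `S` containing at least two points
    (ν : Measure ℝ) [IsProbabilityMeasure ν]
    (S : Set ℝ) (hS : S = {v : ℝ | ∀ U ∈ 𝓝 v, ν U ≠ 0})
    (hScompact : IsCompact S) (hStwo : S.Nontrivial)
    -- `ν'` is the product measure `ν^ℤ` on `ℝ^ℤ`
    (ν' : Measure (ℤ → ℝ)) [IsProbabilityMeasure ν']
    (hν' : ∀ (F : Finset ℤ) (t : ℤ → Set ℝ), (∀ i, MeasurableSet (t i)) →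
      ν' {ω | ∀ i ∈ F, ω i ∈ t i} = ∏ i ∈ F, ν (t i))
    -- the perturbed Schrödinger operators `H_{x,ω}` on `ℓ²(ℤ)`
    (H' : X → (ℤ → ℝ) → (lp (fun _ : ℤ => ℝ) 2 →L[ℝ] lp (fun _ : ℤ => ℝ) 2))
    (hH' : ∀ (x : X) (ω : ℤ → ℝ), (∀ n, ω n ∈ S) →
      ∀ (ψ : lp (fun _ : ℤ => ℝ) 2) (n : ℤ),
        (H' x ω ψ) n = ψ (n + 1) + ψ (n - 1) + (f ((T.toEquiv ^ n) x) + ω n) * ψ n)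
    (hH'sa : ∀ x ω, (∀ n, ω n ∈ S) → IsSelfAdjoint (H' x ω))
    -- the perturbed almost sure spectrum `Λ₁`
    (Λ₁ : Set ℝ) (hΛ₁compact : IsCompact Λ₁)
    (hΛ₁ : ∀ᵐ p ∂(μ.prod ν'), spectrum ℝ (H' p.1 p.2) = Λ₁) :
    Λ₁ ⊆ (Λ₀ + Set.Icc (sInf S) (sSup S)) ∩ (Set.Icc (sInf Λ₀) (sSup Λ₀) + S) := by
  classical
  -- `S` has full `ν`-measure
  have hSmeas : MeasurableSet S := hScompact.isClosed.measurableSet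
  have hSc : ν Sᶜ = 0 := by
    have hSc_sub : ∀ v ∈ Sᶜ, ∃ U : Set ℝ, IsOpen U ∧ v ∈ U ∧ ν U = 0 := by
      intro v hv
      rw [hS] at hv
      simp only [Set.mem_compl_iff, Set.mem_setOf_eq, not_forall] at hv
      obtain ⟨U, hU, hνU⟩ := hv
      obtain ⟨O, hOU, hOopen, hvO⟩ := mem_nhds_iff.mp hU
      refine ⟨O, hOopen, hvO, measure_mono_null hOU ?_⟩
      simpa using hνU
    choose! U hUopen hUmem hUnull using hSc_sub
    obtain ⟨Tc, hTc, hTeq⟩ := TopologicalSpace.isOpen_iUnion_countable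
      (fun v : ↥(Sᶜ) => U v.1) (fun v => hUopen v.1 v.2)
    have hcover : Sᶜ ⊆ ⋃ v ∈ Tc, U (v : ↥(Sᶜ)).1 := by
      rw [hTeq]
      intro w hw
      exact Set.mem_iUnion.mpr ⟨⟨w, hw⟩, hUmem w hw⟩
    have hnull : ν (⋃ v ∈ Tc, U (v : ↥(Sᶜ)).1) = 0 :=
      (measure_biUnion_null_iff hTc).mpr fun i _ => hUnull i.1 i.2
    exact measure_mono_null hcover hnull
  have hνS : ν S = 1 := by
    have h1 := measure_add_measure_compl (μ := ν) hSmeas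
    rw [hSc, add_zero, measure_univ] at h1
    exact h1
  -- almost every `ω` has all coordinates in `S`
  have hων : ∀ᵐ ω ∂ν', ∀ n : ℤ, ω n ∈ S := by
    rw [ae_all_iff]
    intro n
    have h2 := hν' {n} (fun _ => S) (fun _ => hSmeas)
    rw [Finset.prod_singleton, hνS] at h2
    have h3 : {ω : ℤ → ℝ | ∀ i ∈ ({n} : Finset ℤ), ω i ∈ S} = {ω : ℤ → ℝ | ω n ∈ S} := by
      ext ω; simp
    rw [h3] at h2
    have hmeas : MeasurableSet {ω : ℤ → ℝ | ω n ∈ S} := measurable_pi_apply n hSmeas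
    rw [ae_iff]
    have h4 : {ω : ℤ → ℝ | ¬ ω n ∈ S} = {ω : ℤ → ℝ | ω n ∈ S}ᶜ := rfl
    rw [h4, measure_compl hmeas (measure_ne_top _ _), h2, measure_univ, tsub_self]
  -- pick a good point `(x, ω)`
  have hmp1 : ∀ᵐ p ∂(μ.prod ν'), spectrum ℝ (H p.1) = Λ₀ :=
    (Measure.quasiMeasurePreserving_fst (μ := μ) (ν := ν')).ae hΛ₀
  have hmp2 : ∀ᵐ p ∂(μ.prod ν'), ∀ n : ℤ, p.2 n ∈ S :=
    (Measure.quasiMeasurePreserving_snd (μ := μ) (ν := ν')).ae hων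
  have hne : (μ.prod ν') ≠ 0 := IsProbabilityMeasure.ne_zero _
  haveI : (ae (μ.prod ν')).NeBot := ae_neBot.mpr hne
  obtain ⟨p, hp1, hp2, hp3⟩ := (hΛ₁.and (hmp1.and hmp2)).exists
  set x := p.1 with hxdef
  set ω := p.2 with hωdef
  have hspecB : spectrum ℝ (H x) = Λ₀ := hp2
  have hspecA : spectrum ℝ (H' x ω) = Λ₁ := hp1
  have hωS : ∀ n : ℤ, ω n ∈ S := hp3
  -- basic facts about S and ω
  have hSne : S.Nonempty := hStwo.nonempty
  have hωlb : ∀ n, sInf S ≤ ω n := fun n => csInf_le hScompact.bddBelow (hωS n)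
  have hωub : ∀ n, ω n ≤ sSup S := fun n => le_csSup hScompact.bddAbove (hωS n)
  have hSinf_sup : sInf S ≤ sSup S := Real.sInf_le_sSup _ hScompact.bddBelow hScompact.bddAbove
  -- lp coordinate facts
  have hdiffc : ∀ (φ : lp (fun _ : ℤ => ℝ) 2) (n : ℤ),
      ((H' x ω) φ) n - ((H x) φ) n = ω n * φ n := by
    intro φ n
    rw [hH' x ω hωS φ n, hH x φ n]
    ring
  have hinnerR : ∀ u v : ℝ, @inner ℝ _ _ u v = u * v := by
    intro u v
    simp [RCLike.inner_apply, starRingEnd_apply, star_trivial]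
    ring
  have hsum2 : ∀ φ ξ : lp (fun _ : ℤ => ℝ) 2, Summable (fun n : ℤ => φ n * ξ n) := by
    intro φ ξ
    have h := lp.summable_inner (𝕜 := ℝ) φ ξ
    refine h.congr fun n => ?_
    exact hinnerR _ _
  have hinself : ∀ φ : lp (fun _ : ℤ => ℝ) 2, ∑' n : ℤ, φ n * φ n = ‖φ‖ * ‖φ‖ := by
    intro φ
    have h1 : @inner ℝ _ _ φ φ = ∑' n : ℤ, @inner ℝ _ _ (φ n) (φ n) := lp.inner_eq_tsum φ φ
    rw [real_inner_self_eq_norm_mul_norm] at h1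
    rw [h1]
    exact tsum_congr fun n => (hinnerR _ _).symm
  have hinner_tsum : ∀ φ ξ : lp (fun _ : ℤ => ℝ) 2,
      @inner ℝ _ _ φ ξ = ∑' n : ℤ, φ n * ξ n := by
    intro φ ξ
    rw [lp.inner_eq_tsum]
    exact tsum_congr fun n => hinnerR _ _
  set C : ℝ := max |sInf S| |sSup S| with hCdef
  have hC : ∀ n, |ω n| ≤ C := by
    intro n
    rw [abs_le]
    constructor
    · have h1 : -C ≤ -|sInf S| := by
        simp only [neg_le_neg_iff]
        exact le_max_left _ _
      calc -C ≤ -|sInf S| := h1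
        _ ≤ sInf S := neg_abs_le _
        _ ≤ ω n := hωlb n
    · calc ω n ≤ sSup S := hωub n
        _ ≤ |sSup S| := le_abs_self _
        _ ≤ C := le_max_right _ _
  have hsumω : ∀ φ : lp (fun _ : ℤ => ℝ) 2, Summable (fun n : ℤ => ω n * (φ n * φ n)) := by
    intro φ
    refine Summable.of_norm_bounded ((hsum2 φ φ).mul_left C) ?_
    intro n
    rw [Real.norm_eq_abs, abs_mul, abs_of_nonneg (mul_self_nonneg (φ n))]
    exact mul_le_mul_of_nonneg_right (hC n) (mul_self_nonneg _)
  have hdiag : ∀ φ : lp (fun _ : ℤ => ℝ) 2,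
      @inner ℝ _ _ φ ((H' x ω) φ) = @inner ℝ _ _ φ ((H x) φ) + ∑' n : ℤ, ω n * (φ n * φ n) := by
    intro φ
    have h1 : @inner ℝ _ _ φ ((H' x ω) φ - (H x) φ) = ∑' n : ℤ, φ n * (ω n * φ n) := by
      rw [hinner_tsum]
      refine tsum_congr fun n => ?_
      have h2 : ((H' x ω) φ - (H x) φ) n = ω n * φ n := by
        rw [lp.coeFn_sub, Pi.sub_apply, hdiffc]
      rw [h2]
    rw [inner_sub_right] at h1
    have h3 : ∑' n : ℤ, φ n * (ω n * φ n) = ∑' n : ℤ, ω n * (φ n * φ n) := by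
      refine tsum_congr fun n => by ring
    rw [h3] at h1
    linarith
  -- the quadratic form identity for `A₂ := l•1 - H' x ω`
  have happly₂ : ∀ (l : ℝ) (φ : lp (fun _ : ℤ => ℝ) 2),
      @inner ℝ _ _ φ ((algebraMap ℝ _ l - H' x ω) φ)
        = l * (‖φ‖ * ‖φ‖) - @inner ℝ _ _ φ ((H' x ω) φ) := by
    intro l φ
    rw [ContinuousLinearMap.sub_apply, Algebra.algebraMap_eq_smul_one,
      ContinuousLinearMap.smul_apply, ContinuousLinearMap.one_apply, inner_sub_right,
      real_inner_smul_right, real_inner_self_eq_norm_mul_norm]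
  intro l hl
  constructor
  · -- Part 1 : `l ∈ Λ₀ + [inf S, sup S]`
    by_contra hcon
    obtain ⟨δ, hδ0, hδfar⟩ : ∃ δ > 0, ∀ t ∈ Λ₀, ∀ u ∈ Set.Icc (sInf S) (sSup S),
        δ ≤ |l - (t + u)| := by
      rcases Λ₀.eq_empty_or_nonempty with h0 | h0
      · exact ⟨1, one_pos, by simp [h0]⟩
      · set K := Λ₀ + Set.Icc (sInf S) (sSup S) with hK
        have hKcomp : IsCompact K := hΛ₀compact.add isCompact_Icc
        have hKne : K.Nonempty := Set.add_nonempty.mpr ⟨h0, Set.nonempty_Icc.mpr hSinf_sup⟩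
        refine ⟨Metric.infDist l K, (hKcomp.isClosed.notMem_iff_infDist_pos hKne).mp hcon, ?_⟩
        intro t ht u hu
        have h1 := Metric.infDist_le_dist_of_mem (x := l) (Set.add_mem_add ht hu)
        rw [hK]
        rwa [Real.dist_eq] at h1
    set m : ℝ := (sInf S + sSup S) / 2 with hmdef
    set r : ℝ := (sSup S - sInf S) / 2 with hrdef
    have hr0 : 0 ≤ r := by rw [hrdef]; linarith
    have hfar : ∀ t ∈ spectrum ℝ (H x), r + δ ≤ |t - (l - m)| := by
      intro t ht
      rw [hspecB] at ht
      rcases le_or_gt (l - t) (sInf S) with hw | hw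
      · have h1 := hδfar t ht (sInf S) (Set.mem_Icc.mpr ⟨le_refl _, hSinf_sup⟩)
        rw [abs_of_nonpos (by linarith)] at h1
        have h2 : r + δ ≤ t - (l - m) := by rw [hmdef, hrdef]; linarith
        calc r + δ ≤ t - (l - m) := h2
          _ ≤ |t - (l - m)| := le_abs_self _
      · rcases le_or_gt (sSup S) (l - t) with hw2 | hw2
        · have h1 := hδfar t ht (sSup S) (Set.mem_Icc.mpr ⟨hSinf_sup, le_refl _⟩)
          rw [abs_of_nonneg (by linarith)] at h1
          have h2 : r + δ ≤ -(t - (l - m)) := by rw [hmdef, hrdef]; linarith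
          calc r + δ ≤ -(t - (l - m)) := h2
            _ ≤ |t - (l - m)| := neg_le_abs _
        · have h1 := hδfar t ht (l - t) (Set.mem_Icc.mpr ⟨hw.le, hw2.le⟩)
          have h2 : l - (t + (l - t)) = 0 := by ring
          rw [h2, abs_zero] at h1
          linarith
    have hTb := aux_far_bound (H x) (hHsa x) (c := l - m) (d := r + δ) (by linarith) hfar
    set A₂ : lp (fun _ : ℤ => ℝ) 2 →L[ℝ] lp (fun _ : ℤ => ℝ) 2 :=
      algebraMap ℝ _ l - H' x ω with hA₂def
    have hA₂sa : IsSelfAdjoint A₂ := ((IsSelfAdjoint.all l).algebraMap _).sub (hH'sa x ω hωS)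
    have hbound : ∀ ψ : lp (fun _ : ℤ => ℝ) 2, δ * ‖ψ‖ ≤ ‖A₂ ψ‖ := by
      intro ψ
      set v₁ : lp (fun _ : ℤ => ℝ) 2 := (l - m) • ψ - (H x) ψ with hv₁def
      set v₂ : lp (fun _ : ℤ => ℝ) 2 := (H' x ω) ψ - (H x) ψ - m • ψ with hv₂def
      have hsplit : A₂ ψ = v₁ - v₂ := by
        rw [hA₂def, ContinuousLinearMap.sub_apply, Algebra.algebraMap_eq_smul_one,
          ContinuousLinearMap.smul_apply, ContinuousLinearMap.one_apply, hv₁def, hv₂def,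
          sub_smul]
        abel
      have hv₁norm : (r + δ) * ‖ψ‖ ≤ ‖v₁‖ := by
        have h1 := hTb ψ
        have heq : (H x - algebraMap ℝ _ (l - m)) ψ = -v₁ := by
          rw [ContinuousLinearMap.sub_apply, Algebra.algebraMap_eq_smul_one,
            ContinuousLinearMap.smul_apply, ContinuousLinearMap.one_apply, hv₁def, neg_sub]
        rw [heq, norm_neg] at h1
        exact h1
      have hv₂coord : ∀ n : ℤ, v₂ n = (ω n - m) * ψ n := by
        intro n
        rw [hv₂def]
        rw [lp.coeFn_sub, Pi.sub_apply, lp.coeFn_sub, Pi.sub_apply, lp.coeFn_smul,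
          Pi.smul_apply, smul_eq_mul]
        have := hdiffc ψ n
        nlinarith [hdiffc ψ n]
      have hv₂norm : ‖v₂‖ ≤ r * ‖ψ‖ := by
        have h1 : ‖v₂‖ * ‖v₂‖ = ∑' n : ℤ, v₂ n * v₂ n := (hinself v₂).symm
        have h2 : ∑' n : ℤ, v₂ n * v₂ n ≤ ∑' n : ℤ, (r * r) * (ψ n * ψ n) := by
          refine Summable.tsum_le_tsum (fun n => ?_) (hsum2 v₂ v₂) (((hsum2 ψ ψ).mul_left (r * r)))
          rw [hv₂coord n]
          have h3 : |ω n - m| ≤ r := by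
            rw [abs_le]
            constructor
            · rw [hmdef, hrdef]; linarith [hωlb n]
            · rw [hmdef, hrdef]; linarith [hωub n]
          nlinarith [mul_self_nonneg (ψ n), abs_nonneg (ω n - m),
            mul_self_le_mul_self (abs_nonneg (ω n - m)) h3, abs_mul_abs_self (ω n - m)]
        have h3 : ∑' n : ℤ, (r * r) * (ψ n * ψ n) = (r * r) * (‖ψ‖ * ‖ψ‖) := by
          rw [tsum_mul_left, hinself]
        nlinarith [norm_nonneg v₂, norm_nonneg ψ, mul_nonneg hr0 (norm_nonneg ψ)]
      calc δ * ‖ψ‖ = (r + δ) * ‖ψ‖ - r * ‖ψ‖ := by ring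
        _ ≤ ‖v₁‖ - ‖v₂‖ := by linarith
        _ ≤ ‖v₁ - v₂‖ := norm_sub_norm_le _ _
        _ = ‖A₂ ψ‖ := by rw [hsplit]
    have hunit := aux_isUnit_of_bound A₂ hA₂sa hδ0 hbound
    have hnot : l ∉ spectrum ℝ (H' x ω) := spectrum.notMem_iff.mpr hunit
    rw [hspecA] at hnot
    exact hnot hl
  · -- Part 2 : `l ∈ [inf Λ₀, sup Λ₀] + S`
    by_contra hcon
    set a : ℝ := sInf Λ₀ with hadef
    set b : ℝ := sSup Λ₀ with hbdef
    have hab : a ≤ b := Real.sInf_le_sSup _ hΛ₀compact.bddBelow hΛ₀compact.bddAbove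
    obtain ⟨δ, hδ0, hδfar⟩ : ∃ δ > 0, ∀ t ∈ Set.Icc a b, ∀ s ∈ S, δ ≤ |l - (t + s)| := by
      set K := Set.Icc a b + S with hK
      have hKcomp : IsCompact K := isCompact_Icc.add hScompact
      have hKne : K.Nonempty := Set.add_nonempty.mpr ⟨Set.nonempty_Icc.mpr hab, hSne⟩
      refine ⟨Metric.infDist l K, (hKcomp.isClosed.notMem_iff_infDist_pos hKne).mp hcon, ?_⟩
      intro t ht s hs
      have h1 := Metric.infDist_le_dist_of_mem (x := l) (Set.add_mem_add ht hs)
      rw [hK]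
      rwa [Real.dist_eq] at h1
    have hdichot : ∀ n : ℤ, (b + δ ≤ l - ω n) ∨ (l - ω n ≤ a - δ) := by
      intro n
      rcases le_or_gt (l - ω n) a with hw | hw
      · right
        have h1 := hδfar a (Set.mem_Icc.mpr ⟨le_refl _, hab⟩) (ω n) (hωS n)
        rw [abs_of_nonpos (by linarith)] at h1
        linarith
      · rcases le_or_gt b (l - ω n) with hw2 | hw2
        · left
          have h1 := hδfar b (Set.mem_Icc.mpr ⟨hab, le_refl _⟩) (ω n) (hωS n)
          rw [abs_of_nonneg (by linarith)] at h1
          linarith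
        · exfalso
          have h1 := hδfar (l - ω n) (Set.mem_Icc.mpr ⟨hw.le, hw2.le⟩) (ω n) (hωS n)
          have h2 : l - (l - ω n + ω n) = 0 := by ring
          rw [h2, abs_zero] at h1
          linarith
    set A₂ : lp (fun _ : ℤ => ℝ) 2 →L[ℝ] lp (fun _ : ℤ => ℝ) 2 :=
      algebraMap ℝ _ l - H' x ω with hA₂def
    have hA₂sa : IsSelfAdjoint A₂ := ((IsSelfAdjoint.all l).algebraMap _).sub (hH'sa x ω hωS)
    have hA₂symm := ContinuousLinearMap.isSelfAdjoint_iff_isSymmetric.mp hA₂sa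
    -- spectrum bounds for H x
    have hBub : ∀ φ : lp (fun _ : ℤ => ℝ) 2,
        @inner ℝ _ _ φ ((H x) φ) ≤ b * (‖φ‖ * ‖φ‖) := by
      intro φ
      refine aux_inner_le (H x) (hHsa x) ?_ φ
      rw [hspecB]
      exact fun t ht => le_csSup hΛ₀compact.bddAbove ht
    have hBlb : ∀ φ : lp (fun _ : ℤ => ℝ) 2,
        a * (‖φ‖ * ‖φ‖) ≤ @inner ℝ _ _ φ ((H x) φ) := by
      intro φ
      refine aux_inner_ge (H x) (hHsa x) ?_ φ
      rw [hspecB]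
      exact fun t ht => csInf_le hΛ₀compact.bddBelow ht
    have hbound : ∀ ψ : lp (fun _ : ℤ => ℝ) 2, δ * ‖ψ‖ ≤ ‖A₂ ψ‖ := by
      intro ψ
      set P : ℤ → Prop := fun n => b + δ ≤ l - ω n with hPdef
      have hmemp : Memℓp (fun n : ℤ => if P n then ψ n else 0) 2 := by
        refine memℓp_gen ?_
        refine Summable.of_nonneg_of_le (fun n => Real.rpow_nonneg (norm_nonneg _) _)
          (fun n => ?_) ((lp.memℓp ψ).summable (by norm_num))
        by_cases h : P n
        · simp [h]
        · simp only [h, if_false, norm_zero]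
          rw [Real.zero_rpow (by norm_num)]
          exact Real.rpow_nonneg (norm_nonneg _) _
      have hmemm : Memℓp (fun n : ℤ => if P n then 0 else ψ n) 2 := by
        refine memℓp_gen ?_
        refine Summable.of_nonneg_of_le (fun n => Real.rpow_nonneg (norm_nonneg _) _)
          (fun n => ?_) ((lp.memℓp ψ).summable (by norm_num))
        by_cases h : P n
        · simp only [h, if_true, norm_zero]
          rw [Real.zero_rpow (by norm_num)]
          exact Real.rpow_nonneg (norm_nonneg _) _
        · simp [h]
      set φp : lp (fun _ : ℤ => ℝ) 2 := ⟨fun n : ℤ => if P n then ψ n else 0, hmemp⟩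
        with hφpdef
      set φm : lp (fun _ : ℤ => ℝ) 2 := ⟨fun n : ℤ => if P n then 0 else ψ n, hmemm⟩
        with hφmdef
      have hφpc : ∀ n : ℤ, φp n = if P n then ψ n else 0 := fun n => rfl
      have hφmc : ∀ n : ℤ, φm n = if P n then 0 else ψ n := fun n => rfl
      have hsplit : φp + φm = ψ := by
        apply lp.ext
        funext n
        rw [lp.coeFn_add, Pi.add_apply, hφpc, hφmc]
        by_cases h : P n <;> simp [h]
      have hinner0 : @inner ℝ _ _ φp φm = 0 := by
        rw [hinner_tsum]
        have h1 : ∀ n : ℤ, φp n * φm n = 0 := by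
          intro n
          rw [hφpc, hφmc]
          by_cases h : P n <;> simp [h]
        rw [tsum_congr h1, tsum_zero]
      have hpyth : ‖ψ‖ * ‖ψ‖ = ‖φp‖ * ‖φp‖ + ‖φm‖ * ‖φm‖ := by
        have h1 : @inner ℝ _ _ (φp + φm) (φp + φm)
            = @inner ℝ _ _ φp φp + 2 * @inner ℝ _ _ φp φm + @inner ℝ _ _ φm φm :=
          real_inner_add_add_self _ _
        rw [hsplit, hinner0, real_inner_self_eq_norm_mul_norm,
          real_inner_self_eq_norm_mul_norm, real_inner_self_eq_norm_mul_norm] at h1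
        linarith
      have hy : ‖φp - φm‖ = ‖ψ‖ := by
        have h1 : @inner ℝ _ _ (φp - φm) (φp - φm)
            = @inner ℝ _ _ φp φp - 2 * @inner ℝ _ _ φp φm + @inner ℝ _ _ φm φm :=
          real_inner_sub_sub_self _ _
        rw [hinner0, real_inner_self_eq_norm_mul_norm, real_inner_self_eq_norm_mul_norm,
          real_inner_self_eq_norm_mul_norm] at h1
        have h2 : ‖φp - φm‖ * ‖φp - φm‖ = ‖ψ‖ * ‖ψ‖ := by linarith [hpyth]
        nlinarith [norm_nonneg (φp - φm), norm_nonneg ψ]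
      -- bound on φp
      have hAp : δ * (‖φp‖ * ‖φp‖) ≤ @inner ℝ _ _ φp (A₂ φp) := by
        have h1 : ∑' n : ℤ, ω n * (φp n * φp n) ≤ (l - b - δ) * (‖φp‖ * ‖φp‖) := by
          have h2 : ∑' n : ℤ, ω n * (φp n * φp n)
              ≤ ∑' n : ℤ, (l - b - δ) * (φp n * φp n) := by
            refine Summable.tsum_le_tsum (fun n => ?_) (hsumω φp) ((hsum2 φp φp).mul_left _)
            rw [hφpc]
            by_cases h : P n
            · simp only [h, if_true]
              have h3 : ω n ≤ l - b - δ := by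
                have := h
                rw [hPdef] at this
                linarith [this]
              nlinarith [mul_self_nonneg (ψ n)]
            · simp [h]
          rw [tsum_mul_left, hinself] at h2
          exact h2
        have h4 := hBub φp
        rw [hA₂def, happly₂ l φp, hdiag φp]
        linarith
      -- bound on φm
      have hAm : @inner ℝ _ _ φm (A₂ φm) ≤ -δ * (‖φm‖ * ‖φm‖) := by
        have h1 : (l - a + δ) * (‖φm‖ * ‖φm‖) ≤ ∑' n : ℤ, ω n * (φm n * φm n) := by
          have h2 : ∑' n : ℤ, (l - a + δ) * (φm n * φm n)
              ≤ ∑' n : ℤ, ω n * (φm n * φm n) := by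
            refine Summable.tsum_le_tsum (fun n => ?_) ((hsum2 φm φm).mul_left _) (hsumω φm)
            rw [hφmc]
            by_cases h : P n
            · simp [h]
            · simp only [h, if_false]
              have h3 : l - a + δ ≤ ω n := by
                rcases hdichot n with hcase | hcase
                · exact absurd hcase h
                · linarith
              nlinarith [mul_self_nonneg (ψ n)]
          rw [tsum_mul_left, hinself] at h2
          exact h2
        have h4 := hBlb φm
        rw [hA₂def, happly₂ l φm, hdiag φm]
        linarith
      have hkey : δ * (‖ψ‖ * ‖ψ‖) ≤ @inner ℝ _ _ (φp - φm) (A₂ ψ) := by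
        have hexp : @inner ℝ _ _ (φp - φm) (A₂ ψ)
            = @inner ℝ _ _ φp (A₂ φp) - @inner ℝ _ _ φm (A₂ φm) := by
          conv_lhs => rw [← hsplit]
          rw [map_add, inner_sub_left, inner_add_right, inner_add_right]
          have hcross : @inner ℝ _ _ φm (A₂ φp) = @inner ℝ _ _ φp (A₂ φm) := by
            rw [← hA₂symm.apply_clm φm φp, real_inner_comm]
          rw [hcross]
          ring
        rw [hexp, hpyth]
        linarith
      have hCS := real_inner_le_norm (φp - φm) (A₂ ψ)
      rw [hy] at hCS
      rcases eq_or_ne ψ 0 with rfl | hψ0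
      · simp
      · have hψpos : 0 < ‖ψ‖ := norm_pos_iff.mpr hψ0
        nlinarith
    have hunit := aux_isUnit_of_bound A₂ hA₂sa hδ0 hbound
    have hnot : l ∉ spectrum ℝ (H' x ω) := spectrum.notMem_iff.mpr hunit
    rw [hspecA] at hnot
    exact hnot hl
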